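/- Define ν(h) := ⌊−log₂ h⌋ and ω(h) := (1 + 1/√2)·h·2^{ν(h)/2} + (1/3)(√8 + 2)·2^{−ν(h)/2}. Then liminf_{h↓0} ω(h)/√h = 2√(4/3 + √2) and limsup_{h↓0} ω(h)/√h = (11 + 7√2)/6. In particular ω(h) = O(√h) as h ↓ 0. -/

import Mathlib

noncomputable def ν (h : ℝ) : ℤ := ⌊-Real.logb 2 h⌋

noncomputable def ω (h : ℝ) : ℝ :=
  (1 + 1 / Real.sqrt 2) * h * (2 : ℝ) ^ ((ν h : ℝ) / 2)
    + (1 / 3) * (2 * Real.sqrt 2 + 2) * (2 : ℝ) ^ (-(ν h : ℝ) / 2)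

namespace Stmt10Aux

open Real Filter Set

noncomputable def aa : ℝ := 1 + 1 / Real.sqrt 2
noncomputable def bb : ℝ := (1 / 3) * (2 * Real.sqrt 2 + 2)
noncomputable def ff (t : ℝ) : ℝ := aa * Real.sqrt t + bb / Real.sqrt t
noncomputable def LL : ℝ := (11 + 7 * Real.sqrt 2) / 6
noncomputable def mm : ℝ := 2 * Real.sqrt (4 / 3 + Real.sqrt 2)

lemma s_pos : (0:ℝ) < Real.sqrt 2 := Real.sqrt_pos.mpr (by norm_num)
lemma s_sq : Real.sqrt 2 ^ 2 = 2 := Real.sq_sqrt (by norm_num)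

lemma aa_eq : aa = 1 + Real.sqrt 2 / 2 := by
  have h : (1:ℝ)/Real.sqrt 2 = Real.sqrt 2/2 := by
    rw [div_eq_div_iff (ne_of_gt s_pos) (by norm_num : (2:ℝ) ≠ 0)]
    nlinarith [s_sq]
  unfold aa
  rw [h]

lemma aa_pos : 0 < aa := by
  have := s_pos; unfold aa; positivity

lemma bb_pos : 0 < bb := by
  have := s_pos; unfold bb; positivity

lemma LL_pos : 0 < LL := by
  have := s_pos; unfold LL; positivity

lemma w_sq : Real.sqrt (4 / 3 + Real.sqrt 2) ^ 2 = 4 / 3 + Real.sqrt 2 :=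
  Real.sq_sqrt (by positivity)

/-- characterization of ν -/
lemma nu_eq {n : ℤ} {h : ℝ} (h1 : (2:ℝ) ^ (-(n:ℝ) - 1) < h) (h2 : h ≤ (2:ℝ) ^ (-(n:ℝ))) :
    ν h = n := by
  have hpos : 0 < h := lt_trans (Real.rpow_pos_of_pos two_pos _) h1
  have l1 : -(n:ℝ) - 1 < Real.logb 2 h := by
    have := Real.logb_lt_logb (b := 2) one_lt_two (Real.rpow_pos_of_pos two_pos _) h1
    rwa [Real.logb_rpow (by norm_num) (by norm_num)] at this
  have l2 : Real.logb 2 h ≤ -(n:ℝ) := by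
    have := Real.logb_le_logb_of_le (b := 2) one_lt_two hpos h2
    rwa [Real.logb_rpow (by norm_num) (by norm_num)] at this
  unfold ν
  rw [Int.floor_eq_iff]
  constructor <;> push_cast <;> linarith

/-- the fractional position t = h·2^ν lies in (1/2, 1] -/
lemma t_mem {h : ℝ} (hh : 0 < h) :
    h * (2:ℝ) ^ ((ν h : ℝ)) ∈ Set.Ioc (1/2 : ℝ) 1 := by
  have h1 : (ν h : ℝ) ≤ -Real.logb 2 h := Int.floor_le (-Real.logb 2 h)
  have h2 : -Real.logb 2 h < (ν h : ℝ) + 1 := by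
    have := Int.lt_floor_add_one (-Real.logb 2 h)
    push_cast at this ⊢
    exact this
  have hlow : (2:ℝ) ^ (-(ν h:ℝ) - 1) < h := by
    have h3 : (2:ℝ) ^ (-(ν h:ℝ)-1) < (2:ℝ) ^ (Real.logb 2 h) :=
      Real.rpow_lt_rpow_left_iff one_lt_two |>.mpr (by linarith)
    rwa [Real.rpow_logb two_pos (by norm_num) hh] at h3
  have hup : h ≤ (2:ℝ) ^ (-(ν h:ℝ)) := by
    have h3 : (2:ℝ) ^ (Real.logb 2 h) ≤ (2:ℝ) ^ (-(ν h:ℝ)) :=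
      Real.rpow_le_rpow_left_iff one_lt_two |>.mpr (by linarith)
    rwa [Real.rpow_logb two_pos (by norm_num) hh] at h3
  have h2n : (0:ℝ) < (2:ℝ)^((ν h:ℝ)) := Real.rpow_pos_of_pos two_pos _
  constructor
  · have h3 := mul_lt_mul_of_pos_right hlow h2n
    rw [← Real.rpow_add two_pos, show -(ν h:ℝ)-1+(ν h:ℝ) = -1 by ring,
      Real.rpow_neg_one] at h3
    norm_num at h3 ⊢
    linarith
  · have h3 := mul_le_mul_of_nonneg_right hup h2n.le
    rwa [← Real.rpow_add two_pos, show -(ν h:ℝ)+(ν h:ℝ) = 0 by ring,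
      Real.rpow_zero] at h3

lemma g_eq' (r : ℝ) (hr : 0 < r) (n : ℝ) :
    (aa * r ^ 2 * (2:ℝ) ^ (n/2) + bb * (2:ℝ) ^ (-n/2)) / Real.sqrt (r ^ 2)
      = ff (r ^ 2 * (2:ℝ) ^ n) := by
  have h1 : Real.sqrt (r ^ 2) = r := Real.sqrt_sq hr.le
  have h2half : Real.sqrt ((2:ℝ) ^ n) = (2:ℝ) ^ (n/2) := by
    rw [Real.sqrt_eq_rpow, ← Real.rpow_mul (by norm_num : (0:ℝ) ≤ 2)]
    congr 1
    ring
  have hsq : Real.sqrt (r ^ 2 * (2:ℝ) ^ n) = r * (2:ℝ) ^ (n/2) := by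
    rw [Real.sqrt_mul (by positivity), h1, h2half]
  have h2n2 : (0:ℝ) < (2:ℝ) ^ (n/2) := Real.rpow_pos_of_pos two_pos _
  have hneg : (2:ℝ) ^ (-n/2) = ((2:ℝ) ^ (n/2))⁻¹ := by
    rw [← Real.rpow_neg (by norm_num : (0:ℝ) ≤ 2)]
    ring_nf
  rw [ff, hsq, h1, hneg]
  field_simp

lemma g_eq {h : ℝ} (hh : 0 < h) :
    ω h / Real.sqrt h = ff (h * (2:ℝ) ^ ((ν h : ℝ))) := by
  have h1 : Real.sqrt h ^ 2 = h := Real.sq_sqrt hh.le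
  have := g_eq' (Real.sqrt h) (Real.sqrt_pos.mpr hh) ((ν h : ℝ))
  rw [h1] at this
  unfold aa bb at this
  rw [ω]
  convert this using 3

lemma ff_eval {t : ℝ} (ht : 0 < t) :
    ff t = (aa * Real.sqrt t ^ 2 + bb) / Real.sqrt t := by
  have hup : 0 < Real.sqrt t := Real.sqrt_pos.mpr ht
  rw [ff]
  field_simp

lemma ff_le_LL {t : ℝ} (h1 : 1/2 < t) (h2 : t ≤ 1) : ff t ≤ LL := by
  have hs2 := s_sq
  have hsp := s_pos
  have htp : 0 < t := by linarith
  have hup : 0 < Real.sqrt t := Real.sqrt_pos.mpr htp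
  set s := Real.sqrt 2 with hs
  set u := Real.sqrt t with hu
  have hu2 : u ^ 2 = t := Real.sq_sqrt htp.le
  have hul : s / 2 ≤ u := by nlinarith
  have huu : u ≤ 1 := by nlinarith
  rw [ff_eval htp, ← hu, LL, ← hs, div_le_div_iff₀ hup (by norm_num)]
  rw [aa_eq, ← hs]
  unfold bb
  rw [← hs]
  have h01 : 0 ≤ (u - s/2) * (4/3 - u) :=
    mul_nonneg (by linarith) (by linarith)
  nlinarith [h01, mul_nonneg hsp.le h01, hs2, mul_nonneg hsp.le (mul_nonneg hsp.le h01)]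

lemma mm_le_ff {t : ℝ} (ht : 0 < t) : mm ≤ ff t := by
  have hs2 := s_sq
  have hsp := s_pos
  have hup : 0 < Real.sqrt t := Real.sqrt_pos.mpr ht
  set s := Real.sqrt 2 with hs
  set u := Real.sqrt t with hu
  set w := Real.sqrt (4/3 + s) with hw
  have hw2 : w ^ 2 = 4/3 + s := w_sq
  have hwp : 0 < w := Real.sqrt_pos.mpr (by positivity)
  rw [ff_eval ht, ← hu, mm, ← hs, ← hw, le_div_iff₀ hup]
  have hkey : 2 * w * u * aa ≤ (aa * u ^ 2 + bb) * aa := by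
    rw [aa_eq, ← hs]
    unfold bb
    rw [← hs]
    nlinarith [sq_nonneg ((1 + s/2) * u - w), hs2, hw2]
  have := le_of_mul_le_mul_right hkey aa_pos
  linarith

lemma half_mem : (1/2 : ℝ) < 2 * Real.sqrt 2 / 3 ∧ 2 * Real.sqrt 2 / 3 ≤ 1 := by
  constructor <;> nlinarith [s_sq, s_pos]

lemma ff_at_min : ff (2 * Real.sqrt 2 / 3) ≤ mm := by
  have hs2 := s_sq
  have hsp := s_pos
  set s := Real.sqrt 2 with hs
  set t := 2 * s / 3 with htdef
  have htp : 0 < t := by positivity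
  have hup : 0 < Real.sqrt t := Real.sqrt_pos.mpr htp
  set u := Real.sqrt t with hu
  have hu2 : u ^ 2 = t := Real.sq_sqrt htp.le
  rw [ff_eval htp, ← hu, mm, ← hs, div_le_iff₀ hup]
  set w := Real.sqrt (4/3 + s) with hw
  have hw2 : w ^ 2 = 4/3 + s := w_sq
  have hwp : 0 < w := Real.sqrt_pos.mpr (by positivity)
  have hwu : w * u = Real.sqrt ((4/3 + s) * t) := (Real.sqrt_mul (by positivity) t).symm
  have hLHS : aa * u ^ 2 + bb = 4 * (s + 1) / 3 := by
    rw [hu2, htdef, aa_eq, ← hs]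
    unfold bb
    rw [← hs]
    linear_combination (1/3) * hs2
  rw [hLHS]
  have : 4 * (s + 1) / 3 ≤ 2 * Real.sqrt ((4/3 + s) * t) := by
    rw [show (4:ℝ) * (s + 1) / 3 = 2 * (2 * (s+1)/3) by ring]
    apply mul_le_mul_of_nonneg_left _ (by norm_num : (0:ℝ) ≤ 2)
    rw [show (2 * (s+1)/3 : ℝ) = Real.sqrt ((2*(s+1)/3)^2) from (Real.sqrt_sq (by positivity)).symm]
    apply Real.sqrt_le_sqrt
    rw [htdef]
    nlinarith [hs2]
  calc 4 * (s + 1) / 3 ≤ 2 * Real.sqrt ((4/3 + s) * t) := this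
  _ = 2 * w * u := by rw [mul_assoc, hwu]

lemma ff_at_half : ff (1/2) = LL := by
  have hs2 := s_sq
  have hsp := s_pos
  have h12 : Real.sqrt (1/2 : ℝ) = Real.sqrt 2 / 2 := by
    rw [one_div, Real.sqrt_inv, inv_eq_one_div,
      div_eq_div_iff (ne_of_gt hsp) (by norm_num : (2:ℝ) ≠ 0)]
    nlinarith [hs2]
  rw [ff, h12, aa_eq, LL]
  unfold bb
  have hne : Real.sqrt 2 ≠ 0 := ne_of_gt hsp
  field_simp
  nlinarith [hs2, hsp]

/-- the canonical sequences -/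
lemma seq_spec {c : ℝ} (h1 : 1/2 < c) (h2 : c ≤ 1) (k : ℕ) :
    0 < c * (2:ℝ) ^ (-(k:ℝ)) ∧
    (ν (c * (2:ℝ) ^ (-(k:ℝ))) : ℝ) = (k:ℝ) ∧
    c * (2:ℝ) ^ (-(k:ℝ)) * (2:ℝ) ^ ((k:ℝ)) = c := by
  have h2k : (0:ℝ) < (2:ℝ) ^ (-(k:ℝ)) := Real.rpow_pos_of_pos two_pos _
  have hpos : 0 < c * (2:ℝ) ^ (-(k:ℝ)) := mul_pos (by linarith) h2k
  have hnu : ν (c * (2:ℝ) ^ (-(k:ℝ))) = (k:ℤ) := by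
    apply nu_eq
    · push_cast
      calc (2:ℝ) ^ (-(k:ℝ) - 1) = (2:ℝ)^(-(k:ℝ)) * (2:ℝ)^(-1:ℝ) := by
            rw [← Real.rpow_add two_pos]; ring_nf
      _ = (2:ℝ)^(-(k:ℝ)) * (1/2) := by rw [Real.rpow_neg_one]; norm_num
      _ < c * (2:ℝ)^(-(k:ℝ)) := by nlinarith
    · push_cast
      nlinarith
  refine ⟨hpos, by rw [hnu]; norm_cast, ?_⟩
  rw [mul_assoc, ← Real.rpow_add two_pos]
  norm_num

lemma seq_tendsto {c : ℕ → ℝ} (h1 : ∀ k, 1/2 < c k) (h2 : ∀ k, c k ≤ 1) :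
    Filter.Tendsto (fun k : ℕ => c k * (2:ℝ) ^ (-(k:ℝ))) Filter.atTop
      (nhdsWithin 0 (Set.Ioi 0)) := by
  apply tendsto_nhdsWithin_of_tendsto_nhds_of_eventually_within
  · have hbound : ∀ k : ℕ, c k * (2:ℝ) ^ (-(k:ℝ)) ≤ (1/2:ℝ)^(k:ℕ) := by
      intro k
      have h2k : (0:ℝ) < (2:ℝ) ^ (-(k:ℝ)) := Real.rpow_pos_of_pos two_pos _
      have : (2:ℝ) ^ (-(k:ℝ)) = (1/2:ℝ)^(k:ℕ) := by
        rw [Real.rpow_neg (by norm_num), Real.rpow_natCast]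
        rw [one_div, inv_pow]
      rw [← this]
      nlinarith [h2 k, h2k]
    have hbound0 : ∀ k : ℕ, 0 ≤ c k * (2:ℝ) ^ (-(k:ℝ)) := by
      intro k
      have h2k : (0:ℝ) < (2:ℝ) ^ (-(k:ℝ)) := Real.rpow_pos_of_pos two_pos _
      nlinarith [h1 k, h2k]
    exact squeeze_zero hbound0 hbound
      (tendsto_pow_atTop_nhds_zero_of_lt_one (by norm_num) (by norm_num))
  · filter_upwards with k
    have h2k : (0:ℝ) < (2:ℝ) ^ (-(k:ℝ)) := Real.rpow_pos_of_pos two_pos _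
    exact mul_pos (by linarith [h1 k]) h2k

end Stmt10Aux

theorem stmt_10 :
    Filter.liminf (fun h : ℝ => ω h / Real.sqrt h) (nhdsWithin 0 (Set.Ioi 0))
      = 2 * Real.sqrt (4 / 3 + Real.sqrt 2) ∧
    Filter.limsup (fun h : ℝ => ω h / Real.sqrt h) (nhdsWithin 0 (Set.Ioi 0))
      = (11 + 7 * Real.sqrt 2) / 6 ∧
    (∃ C > 0, ∀ h ∈ Set.Ioc (0 : ℝ) 1, ω h ≤ C * Real.sqrt h) := by
  open Stmt10Aux Filter Set Real in
  set F := nhdsWithin (0:ℝ) (Set.Ioi 0) with hF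
  set g : ℝ → ℝ := fun h => ω h / Real.sqrt h with hg
  have hgapp : ∀ x : ℝ, g x = ω x / Real.sqrt x := fun _ => rfl
  haveI : F.NeBot := nhdsGT_neBot 0
  -- pointwise bounds
  have hub' : ∀ h : ℝ, 0 < h → g h ≤ LL := by
    intro h hh
    rw [hgapp, g_eq hh]
    obtain ⟨m1, m2⟩ := t_mem hh
    exact ff_le_LL m1 m2
  have hlb' : ∀ h : ℝ, 0 < h → mm ≤ g h := by
    intro h hh
    rw [hgapp, g_eq hh]
    exact mm_le_ff (lt_trans (by norm_num) (t_mem hh).1)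
  have hub : ∀ᶠ h in F, g h ≤ LL :=
    eventually_mem_nhdsWithin.mono fun h hh => hub' h hh
  have hlb : ∀ᶠ h in F, mm ≤ g h :=
    eventually_mem_nhdsWithin.mono fun h hh => hlb' h hh
  have hbddAbove : F.IsBoundedUnder (· ≤ ·) g := ⟨LL, eventually_map.mpr hub⟩
  have hbddBelow : F.IsBoundedUnder (· ≥ ·) g := ⟨mm, eventually_map.mpr hlb⟩
  -- liminf
  have hliminf : Filter.liminf g F = mm := by
    apply le_antisymm
    · -- via min sequence
      apply Filter.liminf_le_of_frequently_le _ hbddBelow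
      have hc := half_mem
      have hseq := seq_tendsto (c := fun _ => 2 * Real.sqrt 2 / 3)
        (fun _ => hc.1) (fun _ => hc.2)
      apply hseq.frequently
      apply Filter.Frequently.of_forall
      intro k
      obtain ⟨hp, hnu, hval⟩ := seq_spec hc.1 hc.2 k
      rw [hgapp, g_eq hp, hnu, hval]
      exact ff_at_min
    · exact Filter.le_liminf_of_le (Filter.isCoboundedUnder_ge_of_eventually_le F hub) hlb
  -- limsup
  have hlimsup : Filter.limsup g F = LL := by
    apply le_antisymm
    · exact Filter.limsup_le_of_le (Filter.isCoboundedUnder_le_of_eventually_le F hlb) hub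
    · -- via sequence approaching 1/2 from the right
      by_contra hlt
      push_neg at hlt
      set ε := (LL - Filter.limsup g F)/2 with hε
      have hεpos : 0 < ε := by rw [hε]; linarith
      have hc1 : ∀ k : ℕ, 1/2 < 1/2 + 1/((k:ℝ)+2) := by
        intro k; have : (0:ℝ) < 1/((k:ℝ)+2) := by positivity
        linarith
      have hc2 : ∀ k : ℕ, 1/2 + 1/((k:ℝ)+2) ≤ 1 := by
        intro k
        have h2 : (2:ℝ) ≤ (k:ℝ)+2 := by
          have := Nat.cast_nonneg (α := ℝ) k
          linarith
        have : 1/((k:ℝ)+2) ≤ 1/2 := by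
          apply div_le_div_of_nonneg_left (by norm_num) (by norm_num) h2
        linarith
      set c : ℕ → ℝ := fun k => 1/2 + 1/((k:ℝ)+2) with hcdef
      have hseq := seq_tendsto (c := c) hc1 hc2
      -- c k → 1/2 and ff (c k) → ff (1/2) = LL
      have hctend : Filter.Tendsto c Filter.atTop (nhds (1/2 : ℝ)) := by
        rw [show (1/2:ℝ) = 1/2 + 0 by ring]
        apply Filter.Tendsto.const_add
        simp only [one_div]
        exact tendsto_inv_atTop_zero.comp
          (tendsto_atTop_add_const_right Filter.atTop (2:ℝ) tendsto_natCast_atTop_atTop)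
      have hffcont : ContinuousAt ff (1/2 : ℝ) := by
        have h12 : Real.sqrt (1/2 : ℝ) ≠ 0 := by
          apply ne_of_gt; apply Real.sqrt_pos.mpr; norm_num
        apply ContinuousAt.add
        · exact continuousAt_const.mul Real.continuous_sqrt.continuousAt
        · exact continuousAt_const.div Real.continuous_sqrt.continuousAt h12
      have hfftend : Filter.Tendsto (fun k => ff (c k)) Filter.atTop (nhds LL) := by
        rw [← ff_at_half]
        exact hffcont.tendsto.comp hctend
      have hev : ∀ᶠ k in Filter.atTop, LL - ε ≤ ff (c k) :=
        hfftend.eventually (eventually_ge_nhds (by linarith))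
      have hfreq : ∃ᶠ h in F, LL - ε ≤ g h := by
        apply hseq.frequently
        apply hev.frequently.mono
        intro k hk
        obtain ⟨hp, hnu, hval⟩ := seq_spec (hc1 k) (hc2 k) k
        rw [hgapp, g_eq hp, hnu, hval]
        exact hk
      have := Filter.le_limsup_of_frequently_le hfreq hbddAbove
      rw [hε] at this
      linarith
  refine ⟨hliminf, hlimsup, ⟨LL, LL_pos, ?_⟩⟩
  intro h hh
  have := hub' h hh.1
  rw [hgapp, div_le_iff₀ (Real.sqrt_pos.mpr hh.1)] at this
  linarith [this]
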